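/- Let H be a complex Hilbert space and let a, b be bounded self-adjoint operators on H such that b − a is a compact operator, and assume that a and b are both invertible. Let χ : ℝ → ℝ be the indicator function of the interval (0, ∞); since 0 lies in neither spectrum, χ is continuous on the spectra of a and of b, so the positive spectral projections P₊(a) := cfc χ a and P₊(b) := cfc χ b are defined by the continuous functional calculus. Then P₊(b) − P₊(a) is a compact operator. -/

import Mathlib

open Topology

set_option synthInstance.maxHeartbeats 400000
set_option maxHeartbeats 1000000

section Aux

variable {H : Type*} [NormedAddCommGroup H] [InnerProductSpace ℂ H] [CompleteSpace H]

private theorem pow_diff_compact' (a b : H →L[ℂ] H) (hab : IsCompactOperator (b - a)) (n : ℕ) :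
    IsCompactOperator ((b ^ n - a ^ n : H →L[ℂ] H)) := by
  induction n with
  | zero => simpa using isCompactOperator_zero
  | succ n ih =>
    have key : (b ^ (n+1) - a ^ (n+1) : H →L[ℂ] H)
        = b * (b ^ n - a ^ n) + (b - a) * a ^ n := by
      rw [pow_succ', pow_succ', mul_sub, sub_mul]; abel
    rw [key]
    simp only [ContinuousLinearMap.coe_add, ContinuousLinearMap.mul_def,
      ContinuousLinearMap.coe_comp]
    exact (ih.clm_comp b).add (hab.comp_clm _)

private theorem aeval_diff_compact' (a b : H →L[ℂ] H) (hab : IsCompactOperator (b - a))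
    (p : Polynomial ℝ) :
    IsCompactOperator ((Polynomial.aeval b p - Polynomial.aeval a p : H →L[ℂ] H)) := by
  induction p using Polynomial.induction_on with
  | C r => simpa using isCompactOperator_zero
  | add p q hp hq =>
    have key : (Polynomial.aeval b (p + q) - Polynomial.aeval a (p + q) : H →L[ℂ] H)
        = (Polynomial.aeval b p - Polynomial.aeval a p)
          + (Polynomial.aeval b q - Polynomial.aeval a q) := by
      rw [map_add, map_add]; abel
    rw [key]
    exact hp.add hq
  | monomial n r _ =>
    have e : ∀ c : H →L[ℂ] H, (Polynomial.aeval c (Polynomial.C r * Polynomial.X ^ (n+1))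
        : H →L[ℂ] H) = r • c ^ (n+1) := fun c => by
      rw [map_mul, Polynomial.aeval_C, map_pow, Polynomial.aeval_X,
        Algebra.algebraMap_eq_smul_one, smul_mul_assoc, one_mul]
    rw [e, e, ← smul_sub]
    exact (pow_diff_compact' a b hab (n+1)).smul r

/-- The key continuous-function version. -/
private theorem cfc_diff_compact' (a b : H →L[ℂ] H) (ha : IsSelfAdjoint a)
    (hb : IsSelfAdjoint b) (hab : IsCompactOperator (b - a)) (g : ℝ → ℝ) (hg : Continuous g)
    [Nontrivial H] :
    IsCompactOperator (cfc g b - cfc g a) := by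
  set M : ℝ := max ‖a‖ ‖b‖ with hM
  have hσa : spectrum ℝ a ⊆ Set.Icc (-M) M := fun x hx => by
    have := spectrum.norm_le_norm_of_mem (𝕜 := ℝ) hx
    rw [Real.norm_eq_abs] at this
    exact abs_le.mp (this.trans (le_max_left _ _))
  have hσb : spectrum ℝ b ⊆ Set.Icc (-M) M := fun x hx => by
    have := spectrum.norm_le_norm_of_mem (𝕜 := ℝ) hx
    rw [Real.norm_eq_abs] at this
    exact abs_le.mp (this.trans (le_max_right _ _))
  have hex : ∀ n : ℕ, ∃ p : Polynomial ℝ,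
      ∀ x ∈ Set.Icc (-M) M, |p.eval x - g x| < 1 / (n + 1) := fun n =>
    exists_polynomial_near_of_continuousOn (-M) M g hg.continuousOn _ (by positivity)
  choose p hp using hex
  have hbound : ∀ (c : H →L[ℂ] H), IsSelfAdjoint c → spectrum ℝ c ⊆ Set.Icc (-M) M →
      ∀ n : ℕ, ‖Polynomial.aeval c (p n) - cfc g c‖ ≤ 1 / (n + 1) := by
    intro c hc hσ n
    rw [← cfc_polynomial (p n) c, ← cfc_sub (fun x => (p n).eval x) g c]
    refine norm_cfc_le (by positivity) fun x hx => ?_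
    rw [Real.norm_eq_abs]
    exact (hp n x (hσ hx)).le
  set F : ℕ → H →L[ℂ] H := fun n => Polynomial.aeval b (p n) - Polynomial.aeval a (p n) with hF
  have htend : Filter.Tendsto F Filter.atTop (𝓝 (cfc g b - cfc g a)) := by
    rw [tendsto_iff_norm_sub_tendsto_zero]
    have hsq : ∀ n : ℕ, ‖F n - (cfc g b - cfc g a)‖ ≤ 2 * (1 / (n + 1)) := by
      intro n
      have keq : F n - (cfc g b - cfc g a)
          = (Polynomial.aeval b (p n) - cfc g b) - (Polynomial.aeval a (p n) - cfc g a) := by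
        rw [hF]; exact sub_sub_sub_comm _ _ _ _
      rw [keq]
      calc ‖_ - _‖ ≤ ‖Polynomial.aeval b (p n) - cfc g b‖
            + ‖Polynomial.aeval a (p n) - cfc g a‖ := norm_sub_le _ _
        _ ≤ 1 / (n + 1) + 1 / (n + 1) := add_le_add
            (hbound b hb hσb n) (hbound a ha hσa n)
        _ = 2 * (1 / (n + 1)) := by ring
    have h2 : Filter.Tendsto (fun n : ℕ => 2 * (1 / ((n : ℝ) + 1))) Filter.atTop (𝓝 0) := by
      simpa using (tendsto_one_div_add_atTop_nhds_zero_nat (𝕜 := ℝ)).const_mul 2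
    exact squeeze_zero (fun n => norm_nonneg _) hsq h2
  exact isCompactOperator_of_tendsto htend
    (Filter.Eventually.of_forall fun n => aeval_diff_compact' a b hab (p n))

end Aux
/-- **Corollary A.10 (bounded-operator case).** Let `a` and `b` be invertible bounded
self-adjoint operators on a complex Hilbert space with `b − a` compact.  Then the difference of
positive spectral projections `P₊(b) − P₊(a)` is compact, where `P₊(x) = cfc χ x` with `χ` the
indicator function of `(0, ∞)`. -/
theorem positive_spectral_projection_difference_compact
    {H : Type*} [NormedAddCommGroup H] [InnerProductSpace ℂ H] [CompleteSpace H]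
    (a b : H →L[ℂ] H) (ha : IsSelfAdjoint a) (hb : IsSelfAdjoint b)
    (ha' : IsUnit a) (hb' : IsUnit b)
    (hab : IsCompactOperator (b - a)) :
    IsCompactOperator
      (cfc ((Set.Ioi (0 : ℝ)).indicator fun _ => (1 : ℝ)) b -
        cfc ((Set.Ioi (0 : ℝ)).indicator fun _ => (1 : ℝ)) a) := by
  obtain hH | hH := subsingleton_or_nontrivial H
  · have : (cfc ((Set.Ioi (0 : ℝ)).indicator fun _ => (1 : ℝ)) b -
        cfc ((Set.Ioi (0 : ℝ)).indicator fun _ => (1 : ℝ)) a) = 0 := Subsingleton.elim _ _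
    rw [this]
    simpa using isCompactOperator_zero
  -- the union of the spectra is closed and avoids `0`
  set K : Set ℝ := spectrum ℝ a ∪ spectrum ℝ b with hK
  have hKclosed : IsClosed K := (spectrum.isClosed a).union (spectrum.isClosed b)
  have h0K : (0 : ℝ) ∉ K := by
    rintro (h | h)
    · exact (spectrum.zero_notMem_iff ℝ).mpr ha' h
    · exact (spectrum.zero_notMem_iff ℝ).mpr hb' h
  obtain ⟨ε, hε, hball⟩ := Metric.isOpen_iff.mp hKclosed.isOpen_compl 0 h0K
  -- the continuous surrogate for the indicator function
  set g : ℝ → ℝ := fun x => max 0 (min x ε) / ε with hg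
  have hgc : Continuous g := (continuous_const.max (continuous_id.min continuous_const)).div_const ε
  have heq : ∀ x ∈ K, (Set.Ioi (0 : ℝ)).indicator (fun _ => (1 : ℝ)) x = g x := by
    intro x hx
    have hxball : x ∉ Metric.ball (0 : ℝ) ε := fun h => hball h hx
    rw [Metric.mem_ball, Real.dist_eq, sub_zero, not_lt] at hxball
    rcases lt_or_ge 0 x with hx0 | hx0
    · have hεx : ε ≤ x := by rwa [abs_of_pos hx0] at hxball
      rw [Set.indicator_of_mem (Set.mem_Ioi.mpr hx0), hg]
      simp only
      rw [min_eq_right hεx, max_eq_right hε.le, div_self hε.ne']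
    · rw [Set.indicator_of_notMem (by simpa using not_lt.mpr hx0), hg]
      simp only
      rw [min_eq_left (hx0.trans hε.le), max_eq_left hx0, zero_div]
  have hca : cfc ((Set.Ioi (0 : ℝ)).indicator fun _ => (1 : ℝ)) a = cfc g a :=
    cfc_congr fun x hx => heq x (Or.inl hx)
  have hcb : cfc ((Set.Ioi (0 : ℝ)).indicator fun _ => (1 : ℝ)) b = cfc g b :=
    cfc_congr fun x hx => heq x (Or.inr hx)
  rw [hca, hcb]
  exact cfc_diff_compact' a b ha hb hab g hgc
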